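/- For α, β, p, q > 0, the BFW density g(x) = (Γ(p+q)/(Γ(p)Γ(q)))·(α + β/x²)·exp(αx - β/x)·exp(-q·exp(αx - β/x))·(1 - exp(-exp(αx - β/x)))^{p-1} integrates to 1 over (0, ∞). -/

import Mathlib

open Real MeasureTheory

lemma real_betaIntegral {u v : ℝ} (hu : 0 < u) (hv : 0 < v) :
    ∫ t in Set.Ioo (0:ℝ) 1, t ^ (u-1) * (1-t) ^ (v-1) =
      Real.Gamma u * Real.Gamma v / Real.Gamma (u+v) := by
  have h := Complex.Gamma_mul_Gamma_eq_betaIntegral (s := (u:ℂ)) (t := (v:ℂ))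
    (by simpa using hu) (by simpa using hv)
  have hb : Complex.betaIntegral u v =
      ((∫ t in Set.Ioo (0:ℝ) 1, t ^ (u-1) * (1-t) ^ (v-1) : ℝ) : ℂ) := by
    rw [Complex.betaIntegral]
    rw [show ((∫ t in Set.Ioo (0:ℝ) 1, t ^ (u-1) * (1-t) ^ (v-1) : ℝ)) =
        ∫ t in (0:ℝ)..1, t ^ (u-1) * (1-t) ^ (v-1) by
      rw [intervalIntegral.integral_of_le zero_le_one, MeasureTheory.integral_Ioc_eq_integral_Ioo]]
    rw [← intervalIntegral.integral_ofReal]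
    refine intervalIntegral.integral_congr fun x hx => ?_
    rw [Set.uIcc_of_le zero_le_one] at hx
    rw [Complex.ofReal_mul, Complex.ofReal_cpow hx.1 (u-1),
      Complex.ofReal_cpow (by linarith [hx.2] : (0:ℝ) ≤ 1 - x) (v-1)]
    push_cast
    ring
  rw [hb, Complex.Gamma_ofReal, Complex.Gamma_ofReal, ← Complex.ofReal_add,
    Complex.Gamma_ofReal, ← Complex.ofReal_mul, ← Complex.ofReal_mul] at h
  have h' := Complex.ofReal_injective h
  have hne : Real.Gamma (u+v) ≠ 0 := (Real.Gamma_pos_of_pos (by linarith)).ne'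
  field_simp
  linarith [h']

theorem bfw_pdf_integral_eq_one (α β p q : ℝ) (hα : 0 < α) (hβ : 0 < β)
    (hp : 0 < p) (hq : 0 < q) :
    ∫ x in Set.Ioi (0 : ℝ),
      Real.Gamma (p + q) / (Real.Gamma p * Real.Gamma q) *
        ((α + β / x ^ 2) * Real.exp (α * x - β / x) *
          Real.exp (-q * Real.exp (α * x - β / x)) *
          (1 - Real.exp (-Real.exp (α * x - β / x))) ^ (p - 1)) = 1 := by
  set C : ℝ := Real.Gamma (p + q) / (Real.Gamma p * Real.Gamma q) with hC
  set T : ℝ → ℝ := fun x => α * x - β / x with hT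
  set φ : ℝ → ℝ := fun x => Real.exp (-Real.exp (T x)) with hφ
  set φ' : ℝ → ℝ := fun x =>
    Real.exp (-Real.exp (T x)) * (-(Real.exp (T x) * (α + β / x ^ 2))) with hφ'
  -- derivative of T
  have hTd : ∀ x : ℝ, 0 < x → HasDerivAt T (α + β / x ^ 2) x := by
    intro x hx
    have h1 : HasDerivAt (fun y : ℝ => α * y) α x := by
      simpa using (hasDerivAt_id x).const_mul α
    have h2 : HasDerivAt (fun y : ℝ => β / y) (β * (-(x ^ 2)⁻¹)) x := by
      simpa [div_eq_mul_inv] using (hasDerivAt_inv hx.ne').const_mul β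
    have := h1.sub h2
    exact this.congr_deriv (by ring)
  have hφd : ∀ x : ℝ, 0 < x → HasDerivAt φ (φ' x) x := by
    intro x hx
    exact (((hTd x hx).exp).neg).exp
  -- T strictly monotone on Ioi 0
  have hTmono : StrictMonoOn T (Set.Ioi (0:ℝ)) := by
    intro x hx y hy hxy
    simp only [hT, Set.mem_Ioi] at *
    have : β / y < β / x := div_lt_div_of_pos_left hβ hx hxy
    nlinarith
  have hanti : StrictAntiOn φ (Set.Ioi (0:ℝ)) := by
    intro x hx y hy hxy
    have := hTmono hx hy hxy
    simp only [hφ]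
    exact Real.exp_lt_exp.2 (by simpa using Real.exp_lt_exp.2 this)
  have hinj : Set.InjOn φ (Set.Ioi (0:ℝ)) := hanti.injOn
  -- image
  have himage : φ '' Set.Ioi (0:ℝ) = Set.Ioo (0:ℝ) 1 := by
    ext t
    constructor
    · rintro ⟨x, hx, rfl⟩
      refine ⟨Real.exp_pos _, ?_⟩
      have : -Real.exp (T x) < 0 := neg_neg_iff_pos.mpr (Real.exp_pos _)
      simpa [hφ] using Real.exp_lt_one_iff.mpr this
    · rintro ⟨ht0, ht1⟩
      have hlt : Real.log t < 0 := Real.log_neg ht0 ht1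
      set y : ℝ := Real.log (-Real.log t) with hy
      set s : ℝ := Real.sqrt (y ^ 2 + 4 * α * β) with hs
      have hs2 : s ^ 2 = y ^ 2 + 4 * α * β := Real.sq_sqrt (by positivity)
      have hsnn : 0 ≤ s := Real.sqrt_nonneg _
      set x : ℝ := (y + s) / (2 * α) with hx
      have hxpos : 0 < x := by
        apply div_pos _ (by positivity)
        nlinarith [mul_pos hα hβ]
      have hTx : T x = y := by
        have hxne : x ≠ 0 := hxpos.ne'
        have key2 : α * x ^ 2 - y * x = β := by
          rw [hx]
          field_simp
          nlinarith [hs2]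
        simp only [hT]
        field_simp
        nlinarith [key2]
      refine ⟨x, hxpos, ?_⟩
      simp only [hφ, hTx, hy]
      rw [Real.exp_log (by linarith : (0:ℝ) < -Real.log t)]
      simp [Real.exp_log ht0]
  -- change of variables
  have key := integral_image_eq_integral_abs_deriv_smul (measurableSet_Ioi (a := (0:ℝ)))
    (fun x hx => (hφd x hx).hasDerivWithinAt) hinj
    (fun t => C * (t ^ (q-1) * (1-t) ^ (p-1)))
  rw [himage] at key
  have hrhs : (∫ x in Set.Ioi (0:ℝ), |φ' x| • (C * (φ x ^ (q-1) * (1 - φ x) ^ (p-1))))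
      = ∫ x in Set.Ioi (0 : ℝ),
      C * ((α + β / x ^ 2) * Real.exp (α * x - β / x) *
          Real.exp (-q * Real.exp (α * x - β / x)) *
          (1 - Real.exp (-Real.exp (α * x - β / x))) ^ (p - 1)) := by
    refine setIntegral_congr_fun (measurableSet_Ioi) fun x hx => ?_
    simp only [Set.mem_Ioi] at hx
    have hD : 0 < α + β / x ^ 2 := by positivity
    have habs : |φ' x| = (α + β / x ^ 2) * Real.exp (T x) * Real.exp (-Real.exp (T x)) := by
      simp only [hφ']
      rw [abs_of_nonpos (by rw [mul_neg]; exact neg_nonpos.mpr (by positivity))]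
      ring
    have hpow : Real.exp (-Real.exp (T x)) ^ (q - 1) =
        Real.exp (-Real.exp (T x) * (q - 1)) := (Real.exp_mul _ _).symm
    rw [smul_eq_mul, habs]
    simp only [hφ]
    rw [hpow]
    have : Real.exp (-q * Real.exp (T x)) =
        Real.exp (-Real.exp (T x)) * Real.exp (-Real.exp (T x) * (q - 1)) := by
      rw [← Real.exp_add]; ring_nf
    simp only [hT] at *
    rw [this]
    ring
  rw [hrhs] at key
  rw [MeasureTheory.integral_const_mul] at key
  rw [real_betaIntegral hq hp] at key
  rw [← key]
  have h1 : Real.Gamma p ≠ 0 := (Real.Gamma_pos_of_pos hp).ne'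
  have h2 : Real.Gamma q ≠ 0 := (Real.Gamma_pos_of_pos hq).ne'
  have h3 : Real.Gamma (p + q) ≠ 0 := (Real.Gamma_pos_of_pos (by linarith)).ne'
  rw [hC, add_comm q p]
  field_simp
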